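/- Let S and r be parameters with 0 < S < 4r, and let u₀ be the standing wave. For all twice continuously differentiable, compactly supported functions h, k : ℝ → ℝ, one has ∫_ℝ k(x)·(Lh)(x)·e^{(4S/r)(u₀(x)² − u₀(x))} dx = ∫_ℝ h(x)·(Lk)(x)·e^{(4S/r)(u₀(x)² − u₀(x))} dx. -/

import Mathlib

open Real Filter Topology MeasureTheory

noncomputable def fpoly (u : ℝ) : ℝ := u * (2 * u - 1) * (1 - u)

noncomputable def Lop (S r : ℝ) (u₀ h : ℝ → ℝ) : ℝ → ℝ := fun x =>
  deriv (deriv h) x + (4 * S / r) * deriv u₀ x * (2 * u₀ x - 1) * deriv h x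
    + S * (deriv fpoly (u₀ x) + (4 / r) * (deriv u₀ x) ^ 2) * h x

lemma fpoly_hasDerivAt (u : ℝ) : HasDerivAt fpoly (-6 * u ^ 2 + 6 * u - 1) u := by
  have h1 : HasDerivAt (fun u : ℝ => u * (2 * u - 1) * (1 - u))
      ((1 * (2 * u - 1) + u * (2 * 1)) * (1 - u) + u * (2 * u - 1) * (-1)) u := by
    exact (((hasDerivAt_id u).mul (((hasDerivAt_id u).const_mul 2).sub_const 1)).mul
      ((hasDerivAt_id u).const_sub 1))
  convert h1 using 1
  · rfl
  · ring

lemma deriv_fpoly (u : ℝ) : deriv fpoly u = -6 * u ^ 2 + 6 * u - 1 :=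
  (fpoly_hasDerivAt u).deriv

theorem L_symmetric (S r : ℝ) (hS : 0 < S) (hSr : S < 4 * r)
    (u₀ : ℝ → ℝ) (hu : ContDiff ℝ 2 u₀)
    (hode : ∀ x : ℝ, deriv (deriv u₀) x + S * fpoly (u₀ x)
      + (2 * S / r) * (2 * u₀ x - 1) * (deriv u₀ x) ^ 2 = 0)
    (hlim1 : Tendsto u₀ atBot (𝓝 1)) (hlim0 : Tendsto u₀ atTop (𝓝 0))
    (hnorm : u₀ 0 = 1 / 2) (hmono : StrictAnti u₀)
    (hbound : ∀ x : ℝ, 0 < u₀ x ∧ u₀ x < 1)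
    (h k : ℝ → ℝ) (hh : ContDiff ℝ 2 h) (hk : ContDiff ℝ 2 k)
    (hhs : HasCompactSupport h) (hks : HasCompactSupport k) :
    ∫ x : ℝ, k x * Lop S r u₀ h x * Real.exp ((4 * S / r) * ((u₀ x) ^ 2 - u₀ x))
      = ∫ x : ℝ, h x * Lop S r u₀ k x * Real.exp ((4 * S / r) * ((u₀ x) ^ 2 - u₀ x)) := by
  set c : ℝ := 4 * S / r with hc
  set w : ℝ → ℝ := fun x => Real.exp (c * ((u₀ x) ^ 2 - u₀ x)) with hw
  -- regularity facts
  have one_le_two : (1 : WithTop ℕ∞) ≤ 2 := by norm_num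
  have hu1 : ContDiff ℝ 1 (deriv u₀) := by
    have := (contDiff_succ_iff_deriv (n := 1)).mp (by exact_mod_cast hu)
    exact this.2.2
  have hh1 : ContDiff ℝ 1 (deriv h) := by
    have := (contDiff_succ_iff_deriv (n := 1)).mp (by exact_mod_cast hh)
    exact this.2.2
  have hk1 : ContDiff ℝ 1 (deriv k) := by
    have := (contDiff_succ_iff_deriv (n := 1)).mp (by exact_mod_cast hk)
    exact this.2.2
  have hud : ∀ x, HasDerivAt u₀ (deriv u₀ x) x := fun x =>
    (hu.differentiable (by norm_num) x).hasDerivAt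
  have hhd : ∀ x, HasDerivAt h (deriv h x) x := fun x =>
    (hh.differentiable (by norm_num) x).hasDerivAt
  have hkd : ∀ x, HasDerivAt k (deriv k x) x := fun x =>
    (hk.differentiable (by norm_num) x).hasDerivAt
  have hhd2 : ∀ x, HasDerivAt (deriv h) (deriv (deriv h) x) x := fun x =>
    (hh1.differentiable one_ne_zero x).hasDerivAt
  have hkd2 : ∀ x, HasDerivAt (deriv k) (deriv (deriv k) x) x := fun x =>
    (hk1.differentiable one_ne_zero x).hasDerivAt
  -- continuity facts
  have cu : Continuous u₀ := hu.continuous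
  have cu' : Continuous (deriv u₀) := hu1.continuous
  have ch : Continuous h := hh.continuous
  have ck : Continuous k := hk.continuous
  have ch' : Continuous (deriv h) := hh1.continuous
  have ck' : Continuous (deriv k) := hk1.continuous
  have ch'' : Continuous (deriv (deriv h)) := hh1.continuous_deriv le_rfl
  have ck'' : Continuous (deriv (deriv k)) := hk1.continuous_deriv le_rfl
  have cw : Continuous w := by
    apply Real.continuous_exp.comp
    exact continuous_const.mul ((cu.pow 2).sub cu)
  have cfp : Continuous (fun x => deriv fpoly (u₀ x)) := by
    have : (fun x => deriv fpoly (u₀ x)) = fun x => -6 * (u₀ x) ^ 2 + 6 * u₀ x - 1 := by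
      funext x; rw [deriv_fpoly]
    rw [this]; continuity
  have cLh : Continuous (Lop S r u₀ h) := by
    unfold Lop
    apply Continuous.add
    apply Continuous.add ch''
    · exact (((continuous_const.mul cu').mul ((continuous_const.mul cu).sub
        continuous_const)).mul ch')
    · exact (continuous_const.mul (cfp.add (continuous_const.mul (cu'.pow 2)))).mul ch
  have cLk : Continuous (Lop S r u₀ k) := by
    unfold Lop
    apply Continuous.add
    apply Continuous.add ck''
    · exact (((continuous_const.mul cu').mul ((continuous_const.mul cu).sub
        continuous_const)).mul ck')
    · exact (continuous_const.mul (cfp.add (continuous_const.mul (cu'.pow 2)))).mul ck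
  set A : ℝ → ℝ := fun x => k x * Lop S r u₀ h x * w x with hA
  set B : ℝ → ℝ := fun x => h x * Lop S r u₀ k x * w x with hB
  have cA : Continuous A := (ck.mul cLh).mul cw
  have cB : Continuous B := (ch.mul cLk).mul cw
  have sA : HasCompactSupport A := (hks.mul_right).mul_right
  have sB : HasCompactSupport B := (hhs.mul_right).mul_right
  have iA : Integrable A := cA.integrable_of_hasCompactSupport sA
  have iB : Integrable B := cB.integrable_of_hasCompactSupport sB
  -- The antiderivative
  set F : ℝ → ℝ := fun x => w x * (k x * deriv h x - h x * deriv k x) with hF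
  have hFd : ∀ x, HasDerivAt F (A x - B x) x := by
    intro x
    have hwg : HasDerivAt (fun x => c * ((u₀ x) ^ 2 - u₀ x))
        (c * (2 * u₀ x ^ 1 * deriv u₀ x - deriv u₀ x)) x :=
      (((hud x).pow 2).sub (hud x)).const_mul c
    have hwd : HasDerivAt w
        (Real.exp (c * ((u₀ x) ^ 2 - u₀ x)) * (c * (2 * u₀ x ^ 1 * deriv u₀ x - deriv u₀ x))) x :=
      hwg.exp
    have hgd : HasDerivAt (fun x => k x * deriv h x - h x * deriv k x)
        ((deriv k x * deriv h x + k x * deriv (deriv h) x)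
          - (deriv h x * deriv k x + h x * deriv (deriv k) x)) x :=
      ((hkd x).mul (hhd2 x)).sub ((hhd x).mul (hkd2 x))
    have := hwd.mul hgd
    convert this using 1
    · rfl
    · rfl
    · rfl
    simp only [hA, hB, hw, Lop, hc]
    have hr : r ≠ 0 := by nlinarith
    field_simp
    ring
  have sG : HasCompactSupport (fun x => k x * deriv h x - h x * deriv k x) := by
    have heq : (fun x => k x * deriv h x - h x * deriv k x)
        = (k * deriv h) + (-(h * deriv k)) := by
      funext x; simp [sub_eq_add_neg]
    rw [heq]
    exact (hks.mul_right).add (hhs.mul_right).neg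
  have sF : HasCompactSupport F := sG.mul_left
  have cF : Continuous F := cw.mul ((ck.mul ch').sub (ch.mul ck'))
  have key : ∫ x, (A x - B x) = 0 :=
    integral_eq_zero_of_hasDerivAt_of_integrable hFd (iA.sub iB)
      (cF.integrable_of_hasCompactSupport sF)
  rw [integral_sub iA iB] at key
  have : ∫ x, A x = ∫ x, B x := by linarith
  simpa [hA, hB, hw, hc, mul_comm] using this
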